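/- Let (e₁,e₂,e₃,e₄) be an orthonormal basis of V with associated self-dual basis forms α₁, α₂, α₃ and anti-self-dual basis forms β₁, β₂, β₃. For every (a₁,a₂,a₃,b₁,b₂,b₃) ∈ ℝ⁶ with a₁² + a₂² + a₃² = 1/2 and b₁² + b₂² + b₃² = 1/2, there exists an orthonormal pair (u,v) in V such that αᵢ(u,v) = aᵢ and βᵢ(u,v) = bᵢ for i = 1,2,3. (Together with the identities Σαᵢ(u,v)² = Σβᵢ(u,v)² = 1/2, this identifies G(2,V) with S²(1/√2) × S²(1/√2).) -/

import Mathlib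

open scoped RealInnerProductSpace

/-- The two-form `eᵢ*∧eⱼ*` associated with an orthonormal basis `e`. -/
noncomputable def wedgeForm {V : Type*} [NormedAddCommGroup V] [InnerProductSpace ℝ V]
    (e : OrthonormalBasis (Fin 4) ℝ V) (i j : Fin 4) (u v : V) : ℝ :=
  ⟪u, e i⟫ * ⟪v, e j⟫ - ⟪u, e j⟫ * ⟪v, e i⟫

/-- The self-dual basis forms `α₁, α₂, α₃` associated with an orthonormal basis. -/
noncomputable def sdForm {V : Type*} [NormedAddCommGroup V] [InnerProductSpace ℝ V]
    (e : OrthonormalBasis (Fin 4) ℝ V) : Fin 3 → V → V → ℝ :=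
  ![fun u v => (1 / Real.sqrt 2) * (wedgeForm e 0 1 u v + wedgeForm e 2 3 u v),
    fun u v => (1 / Real.sqrt 2) * (wedgeForm e 0 2 u v - wedgeForm e 1 3 u v),
    fun u v => (1 / Real.sqrt 2) * (wedgeForm e 0 3 u v + wedgeForm e 1 2 u v)]

/-- The anti-self-dual basis forms `β₁, β₂, β₃` associated with an orthonormal basis. -/
noncomputable def asdForm {V : Type*} [NormedAddCommGroup V] [InnerProductSpace ℝ V]
    (e : OrthonormalBasis (Fin 4) ℝ V) : Fin 3 → V → V → ℝ :=
  ![fun u v => (1 / Real.sqrt 2) * (wedgeForm e 0 1 u v - wedgeForm e 2 3 u v),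
    fun u v => (1 / Real.sqrt 2) * (wedgeForm e 0 2 u v + wedgeForm e 1 3 u v),
    fun u v => (1 / Real.sqrt 2) * (wedgeForm e 0 3 u v - wedgeForm e 1 2 u v)]

lemma exists_pair_of_coords {V : Type*} [NormedAddCommGroup V] [InnerProductSpace ℝ V]
    (e : OrthonormalBasis (Fin 4) ℝ V) (a b : Fin 3 → ℝ) (U W : Fin 4 → ℝ)
    (hU : ∑ i : Fin 4, U i ^ 2 = 1) (hW : ∑ i : Fin 4, W i ^ 2 = 1)
    (hUW : ∑ i : Fin 4, U i * W i = 0)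
    (h01 : U 0 * W 1 - U 1 * W 0 = (a 0 + b 0) / Real.sqrt 2)
    (h23 : U 2 * W 3 - U 3 * W 2 = (a 0 - b 0) / Real.sqrt 2)
    (h02 : U 0 * W 2 - U 2 * W 0 = (a 1 + b 1) / Real.sqrt 2)
    (h13 : U 1 * W 3 - U 3 * W 1 = (b 1 - a 1) / Real.sqrt 2)
    (h03 : U 0 * W 3 - U 3 * W 0 = (a 2 + b 2) / Real.sqrt 2)
    (h12 : U 1 * W 2 - U 2 * W 1 = (a 2 - b 2) / Real.sqrt 2) :
    ∃ u v : V, ‖u‖ = 1 ∧ ‖v‖ = 1 ∧ ⟪u, v⟫ = 0 ∧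
      ∀ i : Fin 3, sdForm e i u v = a i ∧ asdForm e i u v = b i := by
  have hs : (Real.sqrt 2) ^ 2 = 2 := Real.sq_sqrt (by norm_num)
  have hs0 : Real.sqrt 2 ≠ 0 := by positivity
  have k1 : ∀ x y : ℝ, 1/Real.sqrt 2 * ((x+y)/Real.sqrt 2 + (x-y)/Real.sqrt 2) = x := by
    intro x y; field_simp <;> first | ring1 | linear_combination (-x)*hs | linear_combination x*hs | linear_combination (-2*x)*hs | linear_combination 2*x*hs
  have k2 : ∀ x y : ℝ, 1/Real.sqrt 2 * ((x+y)/Real.sqrt 2 - (y-x)/Real.sqrt 2) = x := by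
    intro x y; field_simp <;> first | ring1 | linear_combination (-x)*hs | linear_combination x*hs | linear_combination (-2*x)*hs | linear_combination 2*x*hs
  have k3 : ∀ x y : ℝ, 1/Real.sqrt 2 * ((x+y)/Real.sqrt 2 - (x-y)/Real.sqrt 2) = y := by
    intro x y; field_simp <;> first | ring1 | linear_combination (-y)*hs | linear_combination y*hs | linear_combination (-2*y)*hs | linear_combination 2*y*hs
  have k4 : ∀ x y : ℝ, 1/Real.sqrt 2 * ((x+y)/Real.sqrt 2 + (y-x)/Real.sqrt 2) = y := by
    intro x y; field_simp <;> first | ring1 | linear_combination (-y)*hs | linear_combination y*hs | linear_combination (-2*y)*hs | linear_combination 2*y*hs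
  set u : V := e.repr.symm ((WithLp.equiv 2 _).symm U) with hu
  set v : V := e.repr.symm ((WithLp.equiv 2 _).symm W) with hv
  have hinner : ⟪u, v⟫ = ∑ i : Fin 4, U i * W i := by
    rw [hu, hv, LinearIsometryEquiv.inner_map_map]
    simp [PiLp.inner_apply, RCLike.inner_apply]
    exact Finset.sum_congr rfl (fun i _ => mul_comm _ _)
  have hiu : ∀ j, ⟪u, e j⟫ = U j := by
    intro j
    rw [real_inner_comm, ← OrthonormalBasis.repr_apply_apply]
    simp [hu]
  have hiv : ∀ j, ⟪v, e j⟫ = W j := by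
    intro j
    rw [real_inner_comm, ← OrthonormalBasis.repr_apply_apply]
    simp [hv]
  have hnu : ‖u‖ = 1 := by
    have h : ‖u‖ ^ 2 = 1 := by
      rw [← real_inner_self_eq_norm_sq, hu, LinearIsometryEquiv.inner_map_map]
      rw [PiLp.inner_apply]
      simpa [RCLike.inner_apply, sq] using hU
    nlinarith [norm_nonneg u]
  have hnv : ‖v‖ = 1 := by
    have h : ‖v‖ ^ 2 = 1 := by
      rw [← real_inner_self_eq_norm_sq, hv, LinearIsometryEquiv.inner_map_map]
      rw [PiLp.inner_apply]
      simpa [RCLike.inner_apply, sq] using hW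
    nlinarith [norm_nonneg v]
  refine ⟨u, v, hnu, hnv, by rw [hinner, hUW], ?_⟩
  have w1 : wedgeForm e 0 1 u v = U 0 * W 1 - U 1 * W 0 := by simp [wedgeForm, hiu, hiv]
  have w2 : wedgeForm e 2 3 u v = U 2 * W 3 - U 3 * W 2 := by simp [wedgeForm, hiu, hiv]
  have w3 : wedgeForm e 0 2 u v = U 0 * W 2 - U 2 * W 0 := by simp [wedgeForm, hiu, hiv]
  have w4 : wedgeForm e 1 3 u v = U 1 * W 3 - U 3 * W 1 := by simp [wedgeForm, hiu, hiv]
  have w5 : wedgeForm e 0 3 u v = U 0 * W 3 - U 3 * W 0 := by simp [wedgeForm, hiu, hiv]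
  have w6 : wedgeForm e 1 2 u v = U 1 * W 2 - U 2 * W 1 := by simp [wedgeForm, hiu, hiv]
  intro i
  fin_cases i
  · refine ⟨?_, ?_⟩
    · show 1/Real.sqrt 2 * (wedgeForm e 0 1 u v + wedgeForm e 2 3 u v) = a 0
      rw [w1, w2, h01, h23]; exact k1 (a 0) (b 0)
    · show 1/Real.sqrt 2 * (wedgeForm e 0 1 u v - wedgeForm e 2 3 u v) = b 0
      rw [w1, w2, h01, h23]; exact k3 (a 0) (b 0)
  · refine ⟨?_, ?_⟩
    · show 1/Real.sqrt 2 * (wedgeForm e 0 2 u v - wedgeForm e 1 3 u v) = a 1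
      rw [w3, w4, h02, h13]; exact k2 (a 1) (b 1)
    · show 1/Real.sqrt 2 * (wedgeForm e 0 2 u v + wedgeForm e 1 3 u v) = b 1
      rw [w3, w4, h02, h13]; exact k4 (a 1) (b 1)
  · refine ⟨?_, ?_⟩
    · show 1/Real.sqrt 2 * (wedgeForm e 0 3 u v + wedgeForm e 1 2 u v) = a 2
      rw [w5, w6, h03, h12]; exact k1 (a 2) (b 2)
    · show 1/Real.sqrt 2 * (wedgeForm e 0 3 u v - wedgeForm e 1 2 u v) = b 2
      rw [w5, w6, h03, h12]; exact k3 (a 2) (b 2)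

set_option maxHeartbeats 2000000 in
/-- Every point of `S²(1/√2) × S²(1/√2)` is realized by an orthonormal pair: given
`(a₁,a₂,a₃,b₁,b₂,b₃)` with `Σ aᵢ² = Σ bᵢ² = 1/2`, there is an orthonormal pair `(u,v)`
with `αᵢ(u,v) = aᵢ` and `βᵢ(u,v) = bᵢ` for all `i`. -/
theorem grassmannian_surjects_onto_spheres
    {V : Type*} [NormedAddCommGroup V] [InnerProductSpace ℝ V]
    (hdim : Module.finrank ℝ V = 4)
    (e : OrthonormalBasis (Fin 4) ℝ V)
    (a b : Fin 3 → ℝ)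
    (ha : ∑ i : Fin 3, (a i) ^ 2 = 1 / 2) (hb : ∑ i : Fin 3, (b i) ^ 2 = 1 / 2) :
    ∃ u v : V, ‖u‖ = 1 ∧ ‖v‖ = 1 ∧ ⟪u, v⟫ = 0 ∧
      ∀ i : Fin 3, sdForm e i u v = a i ∧ asdForm e i u v = b i := by
  have hs : (Real.sqrt 2) ^ 2 = 2 := Real.sq_sqrt (by norm_num)
  have hs0 : Real.sqrt 2 ≠ 0 := by positivity
  rw [Fin.sum_univ_three] at ha hb
  by_cases hd : (a 0 + b 0)^2 + (a 1 + b 1)^2 + (a 2 + b 2)^2 = 0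
  · -- degenerate case : b = -a
    have hab0 : b 0 = -a 0 := by
      nlinarith [sq_nonneg (a 0 + b 0), sq_nonneg (a 1 + b 1), sq_nonneg (a 2 + b 2)]
    have hab1 : b 1 = -a 1 := by
      nlinarith [sq_nonneg (a 0 + b 0), sq_nonneg (a 1 + b 1), sq_nonneg (a 2 + b 2)]
    have hab2 : b 2 = -a 2 := by
      nlinarith [sq_nonneg (a 0 + b 0), sq_nonneg (a 1 + b 1), sq_nonneg (a 2 + b 2)]
    have hab : ∀ i : Fin 3, b i = -a i := by
      intro i
      fin_cases i
      · exact hab0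
      · exact hab1
      · exact hab2
    by_cases hm : a 0 ^ 2 + a 1 ^ 2 = 0
    · have h0 : a 0 = 0 := by nlinarith [sq_nonneg (a 0), sq_nonneg (a 1)]
      have h1 : a 1 = 0 := by nlinarith [sq_nonneg (a 0), sq_nonneg (a 1)]
      have h2 : a 2 ^ 2 = 1/2 := by nlinarith
      refine exists_pair_of_coords e a b ![0,1,0,0] ![0,0,Real.sqrt 2 * a 2,0] ?_ ?_ ?_ ?_ ?_ ?_ ?_ ?_ ?_ <;>
        simp only [Fin.sum_univ_four, Matrix.cons_val_zero, Matrix.cons_val_one, Matrix.head_cons,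
          Matrix.cons_val_two, Matrix.tail_cons, Matrix.cons_val_three, hab 0, hab 1, hab 2, h0, h1]
      · norm_num
      · linear_combination a 2 ^ 2 * hs + 2 * h2
      · norm_num
      · norm_num
      · norm_num
      · norm_num
      · norm_num
      · norm_num
      · field_simp; linear_combination a 2 * hs
    · have hmpos : 0 < a 0 ^ 2 + a 1 ^ 2 :=
        lt_of_le_of_ne (by positivity) (Ne.symm hm)
      set m := Real.sqrt (a 0 ^ 2 + a 1 ^ 2) with hmdef
      have hm2 : m ^ 2 = a 0 ^ 2 + a 1 ^ 2 := Real.sq_sqrt (le_of_lt hmpos)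
      have hm0 : m ≠ 0 := by positivity
      refine exists_pair_of_coords e a b ![0, -(a 1)/m, a 0/m, 0]
        ![0, -(Real.sqrt 2 * a 2 * a 0)/m, -(Real.sqrt 2 * a 2 * a 1)/m, Real.sqrt 2 * m]
        ?_ ?_ ?_ ?_ ?_ ?_ ?_ ?_ ?_ <;>
        simp only [Fin.sum_univ_four, Matrix.cons_val_zero, Matrix.cons_val_one, Matrix.head_cons,
          Matrix.cons_val_two, Matrix.tail_cons, Matrix.cons_val_three, hab 0, hab 1, hab 2]
      · field_simp; linear_combination (-1 : ℝ) * hm2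
      · field_simp; linear_combination ((a 1)^2*(a 2)^2 + (a 0)^2*(a 2)^2 + m^4) * hs + ((-1) + 2*(a 1)^2 + 2*(a 0)^2 + 2*m^2) * hm2 + (2*(a 1)^2 + 2*(a 0)^2) * ha
      · field_simp; ring
      · field_simp; ring
      · field_simp; linear_combination (m*(a 0)) * hs
      · field_simp; ring
      · field_simp; linear_combination (-(m*(a 1))) * hs
      · field_simp; ring
      · field_simp; linear_combination ((a 1)^2*(a 2) + (a 0)^2*(a 2)) * hs + ((-2)*(a 2)) * hm2
  · have hDpos : 0 < (a 0 + b 0)^2 + (a 1 + b 1)^2 + (a 2 + b 2)^2 :=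
      lt_of_le_of_ne (by positivity) (Ne.symm hd)
    set n := Real.sqrt (2 * ((a 0 + b 0)^2 + (a 1 + b 1)^2 + (a 2 + b 2)^2)) with hndef
    have hn2 : n ^ 2 = 2 * ((a 0 + b 0)^2 + (a 1 + b 1)^2 + (a 2 + b 2)^2) :=
      Real.sq_sqrt (by positivity)
    have hn0 : n ≠ 0 := by positivity
    refine exists_pair_of_coords e a b
      ![0, Real.sqrt 2 * (a 0 + b 0)/n, Real.sqrt 2 * (a 1 + b 1)/n, Real.sqrt 2 * (a 2 + b 2)/n]
      ![-(n/2), 2*(a 1*b 2 - a 2*b 1)/n, 2*(a 2*b 0 - a 0*b 2)/n, 2*(a 0*b 1 - a 1*b 0)/n]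
      ?_ ?_ ?_ ?_ ?_ ?_ ?_ ?_ ?_ <;>
      simp only [Fin.sum_univ_four, Matrix.cons_val_zero, Matrix.cons_val_one, Matrix.head_cons,
        Matrix.cons_val_two, Matrix.tail_cons, Matrix.cons_val_three]
    · field_simp; linear_combination ((b 2)^2 + (b 1)^2 + (b 0)^2 + 2*(a 2)*(b 2) + (a 2)^2 + 2*(a 1)*(b 1) + (a 1)^2 + 2*(a 0)*(b 0) + (a 0)^2) * hs + ((-1 : ℝ)) * hn2
    · field_simp; linear_combination (n^2 + 2*((a 0+b 0)^2+(a 1+b 1)^2+(a 2+b 2)^2) - 4) * hn2 + (8 + 16*((a 0)*(b 0)+(a 1)*(b 1)+(a 2)*(b 2)) + 4*((a 0)^2+(a 1)^2+(a 2)^2 - 1/2) + 20*((b 0)^2+(b 1)^2+(b 2)^2 - 1/2)) * ha + (8 + 16*((a 0)*(b 0)+(a 1)*(b 1)+(a 2)*(b 2)) + 4*((a 0)^2+(a 1)^2+(a 2)^2 - 1/2) + 4*((b 0)^2+(b 1)^2+(b 2)^2 - 1/2)) * hb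
    · field_simp; linear_combination 0 * hs
    · field_simp; linear_combination (n*(b 0) + n*(a 0)) * hs
    · field_simp; linear_combination ((-2)*(a 2)*(b 0)*(b 2) + (-2)*(a 2)^2*(b 0) + (-2)*(a 1)*(b 0)*(b 1) + (-2)*(a 1)^2*(b 0) + 2*(a 0)*(b 2)^2 + 2*(a 0)*(b 1)^2 + 2*(a 0)*(a 2)*(b 2) + 2*(a 0)*(a 1)*(b 1)) * hs + ((b 0) + (-1)*(a 0)) * hn2 + ((-2)*(b 0) + (-2)*(a 0)) * ha + (2*(b 0) + 2*(a 0)) * hb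
    · field_simp; linear_combination (n*(b 1) + n*(a 1)) * hs
    · field_simp; linear_combination (2*(a 2)*(b 1)*(b 2) + 2*(a 2)^2*(b 1) + (-2)*(a 1)*(b 2)^2 + (-2)*(a 1)*(b 0)^2 + (-2)*(a 1)*(a 2)*(b 2) + 2*(a 0)*(b 0)*(b 1) + (-2)*(a 0)*(a 1)*(b 0) + 2*(a 0)^2*(b 1)) * hs + ((-1)*(b 1) + (a 1)) * hn2 + (2*(b 1) + 2*(a 1)) * ha + ((-2)*(b 1) + (-2)*(a 1)) * hb
    · field_simp; linear_combination (n*(b 2) + n*(a 2)) * hs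
    · field_simp; linear_combination (2*(a 2)*(b 1)^2 + 2*(a 2)*(b 0)^2 + (-2)*(a 1)*(b 1)*(b 2) + 2*(a 1)*(a 2)*(b 1) + (-2)*(a 1)^2*(b 2) + (-2)*(a 0)*(b 0)*(b 2) + 2*(a 0)*(a 2)*(b 0) + (-2)*(a 0)^2*(b 2)) * hs + ((b 2) + (-1)*(a 2)) * hn2 + ((-2)*(b 2) + (-2)*(a 2)) * ha + (2*(b 2) + 2*(a 2)) * hb
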